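/- Let G and H be connected nontrivial graphs with max{a'(G), a'(H)} > 1. Then a'(G □ H) ≤ a'(G) + a'(H). -/

import Mathlib

open SimpleGraph

/-- An edge colouring of `G` is proper if distinct edges sharing a vertex
receive distinct colours. -/
def IsProperEdgeColoring {V : Type*} {γ : Type*} (G : SimpleGraph V) (c : Sym2 V → γ) : Prop :=
  ∀ e₁ ∈ G.edgeSet, ∀ e₂ ∈ G.edgeSet, e₁ ≠ e₂ → (∃ v, v ∈ e₁ ∧ v ∈ e₂) → c e₁ ≠ c e₂

/-- The subgraph of `G` formed by the union of the colour classes `a` and `b`. -/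
def twoColourSubgraph {V : Type*} {γ : Type*} (G : SimpleGraph V) (c : Sym2 V → γ)
    (a b : γ) : SimpleGraph V where
  Adj x y := G.Adj x y ∧ (c s(x, y) = a ∨ c s(x, y) = b)
  symm := ⟨fun x y h => ⟨h.1.symm, by rw [Sym2.eq_swap]; exact h.2⟩⟩
  loopless := ⟨fun x h => G.loopless.1 x h.1⟩

/-- A proper edge colouring is acyclic if the union of any two colour classes
is a forest. -/
def IsAcyclicEdgeColoring {V : Type*} {γ : Type*} (G : SimpleGraph V) (c : Sym2 V → γ) : Prop :=
  IsProperEdgeColoring G c ∧ ∀ a b : γ, (twoColourSubgraph G c a b).IsAcyclic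

/-- The acyclic chromatic index `a'(G)`: the least number of colours in an
acyclic proper edge colouring of `G`. -/
noncomputable def acyclicChromaticIndex {V : Type*} (G : SimpleGraph V) : ℕ :=
  sInf { n | ∃ c : Sym2 V → Fin n, IsAcyclicEdgeColoring G c }

namespace AcyclicAux

open SimpleGraph Walk List

variable {V : Type*}

lemma isAcyclic_mono {A B : SimpleGraph V} (h : A ≤ B) (hB : B.IsAcyclic) : A.IsAcyclic := by
  intro v c hc
  exact hB (c.mapLe h) (hc.mapLe h)

/-- In a forest, a walk with no two consecutive equal edges is a path. -/
lemma isPath_of_chain_ne {T : SimpleGraph V} (hT : T.IsAcyclic) :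
    ∀ {u v : V} (q : T.Walk u v), List.Chain' (· ≠ ·) q.edges → q.IsPath := by
  intro u v q
  induction q with
  | nil => exact fun _ => Walk.IsPath.nil
  | @cons u w v h p ih =>
    intro hch
    classical
    have hp : p.IsPath := ih hch.tail
    have hmem : s(u, w) ∉ p.edges := by
      intro hmemp
      cases p with
      | nil => simp at hmemp
      | @cons w y v h₂ p₂ =>
        rw [Walk.edges_cons, List.mem_cons] at hmemp
        rcases hmemp with heq | hmemp₂
        · rw [Sym2.eq_iff] at heq
          rcases heq with ⟨hu, _⟩ | ⟨hu, _⟩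
          · exact h.ne hu
          · subst hu
            have hne : s(u, w) ≠ s(w, u) := by
              have hch' := hch
              rw [Walk.edges_cons, Walk.edges_cons] at hch'
              exact (List.isChain_cons_cons.mp hch').1
            exact hne (Sym2.eq_swap)
        · have hws : w ∈ p₂.support := p₂.snd_mem_support_of_mem_edges hmemp₂
          have := hp.support_nodup
          rw [Walk.support_cons] at this
          exact (List.nodup_cons.mp this).1 hws
    have hu : u ∉ p.support := by
      intro hu
      have hp₁ : (p.takeUntil u hu).IsPath := hp.takeUntil hu
      have hmem₁ : s(u, w) ∉ (p.takeUntil u hu).edges := fun hx =>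
        hmem (Walk.edges_takeUntil_subset p hu hx)
      have : (Walk.cons h (p.takeUntil u hu)).IsCycle :=
        (Walk.cons_isCycle_iff _ h).mpr ⟨hp₁, hmem₁⟩
      exact hT _ this
    exact hp.cons hu


section Greedy

variable [Fintype V]

noncomputable def greedyCol (G : SimpleGraph V) [DecidableRel G.Adj] (ρ : V → ℕ) (n : ℕ)
    (hn : 0 < n) (v : V) : Fin n :=
  let used : Finset (Fin n) :=
    ((G.neighborFinset v).filter (fun w => ρ w < ρ v)).attach.image
      (fun w => greedyCol G ρ n hn w.1)
  if h : ∃ i : Fin n, i ∉ used then h.choose else ⟨0, hn⟩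
termination_by ρ v
decreasing_by
  exact (Finset.mem_filter.mp w.2).2

lemma greedyCol_valid (G : SimpleGraph V) [DecidableRel G.Adj] (ρ : V → ℕ) (n : ℕ) (hn : 0 < n)
    (hcard : ∀ v, ((G.neighborFinset v).filter (fun w => ρ w < ρ v)).card < n)
    {u v : V} (hadj : G.Adj u v) (hlt : ρ u < ρ v) :
    greedyCol G ρ n hn v ≠ greedyCol G ρ n hn u := by
  have hmem : u ∈ (G.neighborFinset v).filter (fun w => ρ w < ρ v) := by
    simp only [Finset.mem_filter, SimpleGraph.mem_neighborFinset]
    exact ⟨hadj.symm, hlt⟩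
  rw [greedyCol]
  set used : Finset (Fin n) :=
    ((G.neighborFinset v).filter (fun w => ρ w < ρ v)).attach.image
      (fun w => greedyCol G ρ n hn w.1) with hused
  have hucard : used.card < n := by
    calc used.card ≤ _ := Finset.card_image_le
    _ = ((G.neighborFinset v).filter (fun w => ρ w < ρ v)).card := Finset.card_attach
    _ < n := hcard v
  have hex : ∃ i : Fin n, i ∉ used := by
    by_contra hno
    push_neg at hno
    have : (Finset.univ : Finset (Fin n)) ⊆ used := fun i _ => hno i
    have := Finset.card_le_card this
    simp at this
    omega
  rw [dif_pos hex]
  have hchoose := hex.choose_spec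
  intro heq
  apply hchoose
  rw [heq]
  exact Finset.mem_image.mpr ⟨⟨u, hmem⟩, Finset.mem_attach _ _, rfl⟩

lemma colorable_of_greedy (G : SimpleGraph V) [DecidableRel G.Adj] {ρ : V → ℕ}
    (hinj : Function.Injective ρ) {n : ℕ} (hn : 0 < n)
    (hcard : ∀ v, ((G.neighborFinset v).filter (fun w => ρ w < ρ v)).card < n) :
    G.Colorable n := by
  refine ⟨SimpleGraph.Coloring.mk (greedyCol G ρ n hn) ?_⟩
  intro u v hadj
  rcases lt_trichotomy (ρ u) (ρ v) with h | h | h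
  · exact (greedyCol_valid G ρ n hn hcard hadj h).symm
  · exact absurd (hinj h) hadj.ne
  · exact greedyCol_valid G ρ n hn hcard hadj.symm h

lemma colorable_of_degree_lt (G : SimpleGraph V) [DecidableRel G.Adj] {n : ℕ}
    (h : ∀ v, G.degree v < n) [Nonempty V] : G.Colorable n := by
  have hn : 0 < n := lt_of_le_of_lt (Nat.zero_le _) (h (Classical.arbitrary V))
  refine colorable_of_greedy G (ρ := fun v => (Fintype.equivFin V v : ℕ)) ?_ hn ?_
  · intro x y hxy
    exact (Fintype.equivFin V).injective (Fin.val_injective hxy)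
  · intro v
    calc ((G.neighborFinset v).filter _).card ≤ (G.neighborFinset v).card :=
          Finset.card_filter_le _ _
    _ < n := h v

lemma colorable_of_connected_nonregular (G : SimpleGraph V) [DecidableRel G.Adj]
    (hconn : G.Connected) {n : ℕ} (hdeg : ∀ v, G.degree v ≤ n)
    {v₀ : V} (hv₀ : G.degree v₀ < n) : G.Colorable n := by
  have hn : 0 < n := lt_of_le_of_lt (Nat.zero_le _) hv₀
  classical
  set C := Fintype.card V with hC
  have hCpos : 0 < C := Fintype.card_pos_iff.mpr ⟨v₀⟩
  set idx : V → ℕ := fun v => (Fintype.equivFin V v : ℕ) with hidx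
  have hidxlt : ∀ v, idx v < C := fun v => (Fintype.equivFin V v).isLt
  set d : V → ℕ := fun v => G.dist v₀ v with hd
  have hdb : ∀ v, d v ≤ C - 1 := by
    intro v
    obtain ⟨p, hp⟩ := hconn.exists_walk_length_eq_dist v₀ v
    have hpath : p.IsPath := p.isPath_of_length_eq_dist hp
    have := hpath.support_nodup.length_le_card
    rw [Walk.length_support] at this
    simp only [hd]
    omega
  set ρ : V → ℕ := fun v => (C - 1 - d v) * C + idx v with hρ
  have hmono : ∀ x y, d y < d x → ρ x < ρ y := by
    intro x y hxy
    have h1 : C - 1 - d x + 1 ≤ C - 1 - d y := by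
      have := hdb x; have := hdb y; omega
    calc ρ x = (C - 1 - d x) * C + idx x := rfl
      _ < (C - 1 - d x) * C + C := by have := hidxlt x; omega
      _ = (C - 1 - d x + 1) * C := by ring
      _ ≤ (C - 1 - d y) * C := Nat.mul_le_mul_right C h1
      _ ≤ ρ y := Nat.le_add_right _ _
  have hρinj : Function.Injective ρ := by
    intro x y hxy
    have hdeq : d x = d y := by
      by_contra hne
      rcases Nat.lt_or_ge (d x) (d y) with h | h
      · have := hmono y x h; omega
      · have := hmono x y (lt_of_le_of_ne h (fun he => hne he.symm)); omega
    have : idx x = idx y := by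
      simp only [hρ] at hxy
      rw [hdeq] at hxy
      omega
    exact (Fintype.equivFin V).injective (Fin.val_injective this)
  have hclose : ∀ v, v ≠ v₀ → ∃ u, G.Adj v u ∧ d u < d v := by
    intro v hv
    obtain ⟨p, hp⟩ := hconn.exists_walk_length_eq_dist v₀ v
    have hdpos : 0 < d v := hconn.pos_dist_of_ne (Ne.symm hv)
    cases hrev : p.reverse with
    | nil =>
      exfalso
      have : p.length = 0 := by
        have := congrArg Walk.length hrev
        rwa [Walk.length_reverse] at this
      simp only [hd] at hdpos
      omega
    | @cons _ u _ h q =>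
      refine ⟨u, h, ?_⟩
      have hq : G.dist v₀ u ≤ q.reverse.length := SimpleGraph.dist_le _
      rw [Walk.length_reverse] at hq
      have : q.length + 1 = p.length := by
        have := congrArg Walk.length hrev
        rw [Walk.length_reverse] at this
        simp at this
        omega
      simp only [hd]
      omega
  refine colorable_of_greedy G hρinj hn ?_
  intro v
  by_cases hv : v = v₀
  · subst hv
    calc ((G.neighborFinset v).filter _).card ≤ (G.neighborFinset v).card :=
          Finset.card_filter_le _ _
    _ < n := hv₀
  · obtain ⟨u, hadj, hdu⟩ := hclose v hv
    have hρu : ¬ ρ u < ρ v := by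
      have := hmono v u hdu
      omega
    have hsub : (G.neighborFinset v).filter (fun w => ρ w < ρ v) ⊆
        (G.neighborFinset v).erase u := by
      intro w hw
      rw [Finset.mem_erase]
      rw [Finset.mem_filter] at hw
      exact ⟨fun he => hρu (he ▸ hw.2), hw.1⟩
    calc ((G.neighborFinset v).filter _).card ≤ ((G.neighborFinset v).erase u).card :=
          Finset.card_le_card hsub
    _ < (G.neighborFinset v).card := Finset.card_erase_lt_of_mem (by
          rw [SimpleGraph.mem_neighborFinset]; exact hadj)
    _ ≤ n := hdeg v

end Greedy


section Degree

variable [Fintype V]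

omit [Fintype V] in
lemma twoColour_edge_colour {γ : Type*} {G : SimpleGraph V} {c : Sym2 V → γ} {a b : γ}
    {x y : V} (h : (twoColourSubgraph G c a b).Adj x y) :
    c s(x, y) = a ∨ c s(x, y) = b := h.2

omit [Fintype V] in
lemma pair_ne {v w w' : V} (hv : v ≠ w') (hwne : w ≠ w') : s(v, w) ≠ s(v, w') := by
  intro h
  rw [Sym2.eq_iff] at h
  rcases h with ⟨-, h⟩ | ⟨h, -⟩
  · exact hwne h
  · exact hv h

lemma degree_le_of_proper {G : SimpleGraph V} [DecidableRel G.Adj] {n : ℕ}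
    {c : Sym2 V → Fin n} (hc : IsProperEdgeColoring G c) (v : V) : G.degree v ≤ n := by
  classical
  have hinj : Function.Injective (fun w : G.neighborFinset v => c s(v, (w : V))) := by
    rintro ⟨w, hw⟩ ⟨w', hw'⟩ heq
    simp only [SimpleGraph.mem_neighborFinset] at hw hw'
    simp only at heq
    by_contra hne
    have hwne : w ≠ w' := fun h => hne (by simp [h])
    have hedne : s(v, w) ≠ s(v, w') := pair_ne hw'.ne hwne
    exact hc _ (G.mem_edgeSet.mpr hw) _ (G.mem_edgeSet.mpr hw') hedne ⟨v, by simp, by simp⟩ heq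
  have h1 := Fintype.card_le_of_injective _ hinj
  rw [Fintype.card_coe, Fintype.card_fin] at h1
  exact h1

lemma exists_colour_neighbor {G : SimpleGraph V} [DecidableRel G.Adj] {n : ℕ}
    {c : Sym2 V → Fin n} (hc : IsProperEdgeColoring G c)
    {v : V} (hreg : G.degree v = n) (i : Fin n) :
    ∃ w, G.Adj v w ∧ c s(v, w) = i := by
  classical
  set f : G.neighborFinset v → Fin n := fun w => c s(v, (w : V)) with hf
  have hinj : Function.Injective f := by
    rintro ⟨w, hw⟩ ⟨w', hw'⟩ heq
    simp only [SimpleGraph.mem_neighborFinset] at hw hw'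
    simp only [hf] at heq
    by_contra hne
    have hwne : w ≠ w' := fun h => hne (by simp [h])
    have hedne : s(v, w) ≠ s(v, w') := pair_ne hw'.ne hwne
    exact hc _ (G.mem_edgeSet.mpr hw) _ (G.mem_edgeSet.mpr hw') hedne ⟨v, by simp, by simp⟩ heq
  have hcard : Fintype.card (G.neighborFinset v) = Fintype.card (Fin n) := by
    rw [Fintype.card_coe, Fintype.card_fin]
    exact hreg
  have hbij : Function.Bijective f :=
    (Fintype.bijective_iff_injective_and_card f).mpr ⟨hinj, hcard⟩
  obtain ⟨⟨w, hw⟩, hweq⟩ := hbij.2 i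
  rw [SimpleGraph.mem_neighborFinset] at hw
  exact ⟨w, hw, hweq⟩

/-- A regular graph of degree `n ≥ 2` has no acyclic edge colouring with `n` colours. -/
lemma not_acyclic_regular {G : SimpleGraph V} [DecidableRel G.Adj] [Nonempty V] {n : ℕ}
    (hreg : ∀ v, G.degree v = n) (hn : 2 ≤ n)
    {c : Sym2 V → Fin n} (hc : IsAcyclicEdgeColoring G c) : False := by
  classical
  set i0 : Fin n := ⟨0, by omega⟩
  set i1 : Fin n := ⟨1, by omega⟩
  set X := twoColourSubgraph G c i0 i1 with hX
  have hacy : X.IsAcyclic := hc.2 i0 i1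
  set col : ℕ → Fin n := fun m => if m % 2 = 0 then i0 else i1 with hcol
  set P : V → ℕ → V := fun v m => (exists_colour_neighbor hc.1 (hreg v) (col m)).choose with hP
  have hPadj : ∀ v m, G.Adj v (P v m) ∧ c s(v, P v m) = col m := fun v m =>
    (exists_colour_neighbor hc.1 (hreg v) (col m)).choose_spec
  set f : ℕ → V := fun m => Nat.rec (Classical.arbitrary V) (fun m fm => P fm m) m with hfd
  have hstep : ∀ m, f (m + 1) = P (f m) m := fun m => rfl
  have hXadj : ∀ m, X.Adj (f m) (f (m + 1)) := by
    intro m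
    rw [hstep]
    refine ⟨(hPadj (f m) m).1, ?_⟩
    rcases Nat.even_or_odd m with he | ho
    · left; rw [(hPadj (f m) m).2, hcol]; simp [Nat.even_iff.mp he]
    · right; rw [(hPadj (f m) m).2, hcol]; simp [Nat.odd_iff.mp ho]
  have hcolf : ∀ m, c s(f m, f (m + 1)) = col m := by
    intro m; rw [hstep]; exact (hPadj (f m) m).2
  -- build walks
  have hwalk : ∀ m : ℕ, ∃ w : X.Walk (f 0) (f m),
      w.length = m ∧ List.Chain' (· ≠ ·) w.edges ∧
      (∀ e ∈ w.edges.getLast?, c e = col (m - 1)) := by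
    intro m
    induction m with
    | zero => exact ⟨Walk.nil, by simp, by simp [List.Chain'], by simp⟩
    | succ m ih =>
      obtain ⟨w, hlen, hch, hlast⟩ := ih
      refine ⟨w.concat (hXadj m), ?_, ?_, ?_⟩
      · simp [Walk.length_concat, hlen]
      · rw [Walk.edges_concat, List.concat_eq_append]; refine List.isChain_append.mpr ?_
        refine ⟨hch, by simp, ?_⟩
        intro e he e' he'
        simp only [List.head?_cons, Option.mem_some_iff] at he'
        subst he'
        have hce := hlast e he
        intro heq
        rw [heq] at hce
        rw [hcolf m] at hce
        rcases Nat.eq_zero_or_pos m with hm | hm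
        · subst hm
          have hnil : w.edges = [] := List.eq_nil_of_length_eq_zero (by
            rw [w.length_edges]; exact hlen)
          rw [hnil] at he
          simp at he
        · have : (m - 1) % 2 ≠ m % 2 := by omega
          simp only [hcol] at hce
          split_ifs at hce with h1 h2 h2 <;>
            first
              | omega
              | (exact absurd (congrArg Fin.val hce) (by simp [i0, i1]))
      · rw [Walk.edges_concat, List.concat_eq_append]
        intro e he
        rw [List.getLast?_append] at he
        have he' : s(f m, f (m + 1)) = e := by simpa using he
        subst he'
        simpa using hcolf m
  obtain ⟨w, hlen, hch, -⟩ := hwalk (Fintype.card V)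
  have hpath := isPath_of_chain_ne hacy w hch
  have := hpath.support_nodup.length_le_card
  rw [Walk.length_support, hlen] at this
  omega

end Degree


section ACSet

lemma isAcyclic_twoColour_of_le {γ : Type*} {G : SimpleGraph V} {c : Sym2 V → γ}
    {a b : γ} {F : SimpleGraph V} (h : twoColourSubgraph G c a b ≤ F) (hF : F.IsAcyclic) :
    (twoColourSubgraph G c a b).IsAcyclic := isAcyclic_mono h hF

/-- The set of numbers of colours admitting an acyclic edge colouring is upward closed. -/
lemma acyclic_mono_colours {G : SimpleGraph V} {m m' : ℕ} (h : m ≤ m')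
    (hc : ∃ c : Sym2 V → Fin m, IsAcyclicEdgeColoring G c) :
    ∃ c : Sym2 V → Fin m', IsAcyclicEdgeColoring G c := by
  obtain ⟨c, hp, ha⟩ := hc
  refine ⟨fun e => Fin.castLE h (c e), ?_, ?_⟩
  · intro e₁ he₁ e₂ he₂ hne hshare heq
    exact hp e₁ he₁ e₂ he₂ hne hshare (Fin.castLE_injective h heq)
  · intro a b
    by_cases hA : ∃ a₀ : Fin m, Fin.castLE h a₀ = a
    · by_cases hB : ∃ b₀ : Fin m, Fin.castLE h b₀ = b
      · obtain ⟨a₀, ha₀⟩ := hA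
        obtain ⟨b₀, hb₀⟩ := hB
        refine isAcyclic_mono ?_ (ha a₀ b₀)
        intro x y hxy
        refine ⟨hxy.1, ?_⟩
        rcases hxy.2 with hc' | hc'
        · left; exact Fin.castLE_injective h (by simpa using hc'.trans ha₀.symm)
        · right; exact Fin.castLE_injective h (by simpa using hc'.trans hb₀.symm)
      · obtain ⟨a₀, ha₀⟩ := hA
        refine isAcyclic_mono ?_ (ha a₀ a₀)
        intro x y hxy
        refine ⟨hxy.1, ?_⟩
        rcases hxy.2 with hc' | hc'
        · left; exact Fin.castLE_injective h (by simpa using hc'.trans ha₀.symm)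
        · exact absurd ⟨c s(x, y), hc'⟩ hB
    · by_cases hB : ∃ b₀ : Fin m, Fin.castLE h b₀ = b
      · obtain ⟨b₀, hb₀⟩ := hB
        refine isAcyclic_mono ?_ (ha b₀ b₀)
        intro x y hxy
        refine ⟨hxy.1, ?_⟩
        rcases hxy.2 with hc' | hc'
        · exact absurd ⟨c s(x, y), hc'⟩ hA
        · left; exact Fin.castLE_injective h (by simpa using hc'.trans hb₀.symm)
      · refine isAcyclic_mono (B := ⊥) ?_ SimpleGraph.isAcyclic_bot
        intro x y hxy
        rcases hxy.2 with hc' | hc'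
        · exact absurd ⟨c s(x, y), hc'⟩ hA
        · exact absurd ⟨c s(x, y), hc'⟩ hB

variable [Fintype V] [DecidableEq V]

lemma acyclic_exists_injective (G : SimpleGraph V) :
    ∃ c : Sym2 V → Fin (Fintype.card (Sym2 V)), IsAcyclicEdgeColoring G c := by
  refine ⟨fun e => Fintype.equivFin (Sym2 V) e, ?_, ?_⟩
  · intro e₁ _ e₂ _ hne _ heq
    exact hne ((Fintype.equivFin (Sym2 V)).injective heq)
  · intro a b v w hw
    have h3 : 3 ≤ w.length := hw.three_le_length
    have hnodup : w.edges.Nodup := hw.edges_nodup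
    have hlen : 3 ≤ w.edges.length := by rw [w.length_edges]; exact h3
    set e₁ := w.edges.get ⟨0, by omega⟩ with he₁
    set e₂ := w.edges.get ⟨1, by omega⟩ with he₂
    set e₃ := w.edges.get ⟨2, by omega⟩ with he₃
    have hco : ∀ e ∈ w.edges, (Fintype.equivFin (Sym2 V)) e = a ∨
        (Fintype.equivFin (Sym2 V)) e = b := by
      intro e he
      have := w.edges_subset_edgeSet he
      revert this
      refine Sym2.ind (fun x y hxy => ?_) e
      exact hxy.2
    have h12 : e₁ ≠ e₂ := by
      intro h
      have h01 := hnodup.get_inj_iff.mp h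
      rw [Fin.mk.injEq] at h01
      omega
    have h13 : e₁ ≠ e₃ := by
      intro h
      have h01 := hnodup.get_inj_iff.mp h
      rw [Fin.mk.injEq] at h01
      omega
    have h23 : e₂ ≠ e₃ := by
      intro h
      have h01 := hnodup.get_inj_iff.mp h
      rw [Fin.mk.injEq] at h01
      omega
    have hinj := (Fintype.equivFin (Sym2 V)).injective
    rcases hco e₁ (List.get_mem _ _) with h1 | h1 <;>
      rcases hco e₂ (List.get_mem _ _) with h2 | h2 <;>
        rcases hco e₃ (List.get_mem _ _) with h3' | h3' <;>
          first
            | exact h12 (hinj (h1.trans h2.symm))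
            | exact h13 (hinj (h1.trans h3'.symm))
            | exact h23 (hinj (h2.trans h3'.symm))

lemma ACSet_nonempty (G : SimpleGraph V) :
    {n | ∃ c : Sym2 V → Fin n, IsAcyclicEdgeColoring G c}.Nonempty :=
  ⟨Fintype.card (Sym2 V), acyclic_exists_injective G⟩

lemma exists_optimal (G : SimpleGraph V) :
    ∃ c : Sym2 V → Fin (acyclicChromaticIndex G), IsAcyclicEdgeColoring G c :=
  Nat.sInf_mem (ACSet_nonempty G)

lemma aci_le (G : SimpleGraph V) {n : ℕ} (c : Sym2 V → Fin n)
    (h : IsAcyclicEdgeColoring G c) : acyclicChromaticIndex G ≤ n :=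
  Nat.sInf_le ⟨c, h⟩

end ACSet

section Iso

lemma aci_le_of_iso {W : Type*} [Fintype V] [DecidableEq V] [Fintype W] [DecidableEq W]
    {G : SimpleGraph V} {G' : SimpleGraph W} (φ : G ≃g G') :
    acyclicChromaticIndex G ≤ acyclicChromaticIndex G' := by
  obtain ⟨c', hp', ha'⟩ := exists_optimal G'
  refine aci_le G (fun e => c' (e.map φ)) ⟨?_, ?_⟩
  · intro e₁ he₁ e₂ he₂ hne hshare
    refine hp' _ ?_ _ ?_ ?_ ?_
    · revert he₁
      refine Sym2.ind (fun x y hxy => ?_) e₁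
      rw [SimpleGraph.mem_edgeSet] at hxy
      rw [Sym2.map_pair_eq, SimpleGraph.mem_edgeSet]
      exact φ.map_adj_iff.mpr hxy
    · revert he₂
      refine Sym2.ind (fun x y hxy => ?_) e₂
      rw [SimpleGraph.mem_edgeSet] at hxy
      rw [Sym2.map_pair_eq, SimpleGraph.mem_edgeSet]
      exact φ.map_adj_iff.mpr hxy
    · intro heq
      exact hne (Sym2.map.injective φ.injective heq)
    · obtain ⟨v, hv₁, hv₂⟩ := hshare
      exact ⟨φ v, Sym2.mem_map.mpr ⟨v, hv₁, rfl⟩, Sym2.mem_map.mpr ⟨v, hv₂, rfl⟩⟩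
  · intro a b
    intro v w hw
    have hmap : ∀ {x y : V}, (twoColourSubgraph G (fun e => c' (e.map φ)) a b).Adj x y →
        (twoColourSubgraph G' c' a b).Adj (φ x) (φ y) := by
      intro x y hxy
      refine ⟨φ.map_adj_iff.mpr hxy.1, ?_⟩
      have h2 := hxy.2
      simp only [Sym2.map_pair_eq] at h2
      exact h2
    exact ha' a b (w.map ⟨fun v => φ v, hmap⟩)
      (hw.map (f := ⟨fun v => φ v, hmap⟩) (fun x y h => φ.injective h))

end Iso


section Projection

variable {α β : Type*}

lemma edge_rep {Γ : SimpleGraph V} {e : Sym2 V} (he : e ∈ Γ.edgeSet) {v : V} (hv : v ∈ e) :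
    ∃ w, Γ.Adj v w ∧ e = s(v, w) := by
  revert he hv
  refine Sym2.ind (fun x y he hv => ?_) e
  rcases Sym2.mem_iff.mp hv with rfl | rfl
  · exact ⟨y, he, rfl⟩
  · exact ⟨x, (Γ.mem_edgeSet.mp he).symm, Sym2.eq_swap.symm⟩

lemma walk_proj_fst {A : SimpleGraph (α × β)} {F : SimpleGraph α}
    (hAF : ∀ {x y : α × β}, A.Adj x y → x.2 = y.2 ∧ F.Adj x.1 y.1) :
    ∀ {x y : α × β} (p : A.Walk x y), ∃ q : F.Walk x.1 y.1,
      q.edges = p.edges.map (Sym2.map Prod.fst) ∧ q.support = p.support.map Prod.fst ∧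
      ∀ v ∈ p.support, v.2 = x.2 := by
  intro x y p
  induction p with
  | nil => exact ⟨Walk.nil, by simp, by simp, by simp⟩
  | @cons x z y h p ih =>
    obtain ⟨q, hq1, hq2, hq3⟩ := ih
    refine ⟨Walk.cons (hAF h).2 q, ?_, ?_, ?_⟩
    · rw [Walk.edges_cons, Walk.edges_cons, List.map_cons, hq1, Sym2.map_pair_eq]
    · rw [Walk.support_cons, Walk.support_cons, List.map_cons, hq2]
    · intro v hv
      rw [Walk.support_cons, List.mem_cons] at hv
      rcases hv with rfl | hv
      · rfl
      · rw [hq3 v hv]; exact ((hAF h).1).symm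

lemma walk_proj_snd {A : SimpleGraph (α × β)} (Fam : α → SimpleGraph β)
    (hAF : ∀ {x y : α × β}, A.Adj x y → x.1 = y.1 ∧ (Fam x.1).Adj x.2 y.2) :
    ∀ {x y : α × β} (p : A.Walk x y), ∃ q : (Fam x.1).Walk x.2 y.2,
      q.edges = p.edges.map (Sym2.map Prod.snd) ∧ q.support = p.support.map Prod.snd ∧
      ∀ v ∈ p.support, v.1 = x.1 := by
  intro x y p
  induction p with
  | nil => exact ⟨Walk.nil, by simp, by simp, by simp⟩
  | @cons x z y h p ih =>
    obtain ⟨q, hq1, hq2, hq3⟩ := ih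
    have h1 : x.1 = z.1 := (hAF h).1
    have h2 : (Fam x.1).Adj x.2 z.2 := (hAF h).2
    rw [h1] at h2 ⊢
    refine ⟨Walk.cons h2 q, ?_, ?_, ?_⟩
    · rw [Walk.edges_cons, Walk.edges_cons, List.map_cons, hq1, Sym2.map_pair_eq]
    · rw [Walk.support_cons, Walk.support_cons, List.map_cons, hq2]
    · intro v hv
      rw [Walk.support_cons, List.mem_cons] at hv
      rcases hv with rfl | hv
      · exact h1
      · exact hq3 v hv

lemma cycle_transfer {A : SimpleGraph (α × β)} {τ : Type*} {F : SimpleGraph τ} {v : α × β}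
    (p : A.Walk v v) (hp : p.IsCycle) (ϕ : α × β → τ) (q : F.Walk (ϕ v) (ϕ v))
    (hq1 : q.edges = p.edges.map (Sym2.map ϕ))
    (hq2 : q.support = p.support.map ϕ)
    (hinj : ∀ u ∈ p.support, ∀ w ∈ p.support, ϕ u = ϕ w → u = w) : q.IsCycle := by
  have hinj' : ∀ e ∈ p.edges, ∀ e' ∈ p.edges, Sym2.map ϕ e = Sym2.map ϕ e' → e = e' := by
    intro e he e' he' heq
    induction e using Sym2.ind with | _ x₁ x₂ =>
    induction e' using Sym2.ind with | _ y₁ y₂ =>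
    have hx₁ := p.fst_mem_support_of_mem_edges he
    have hx₂ := p.snd_mem_support_of_mem_edges he
    have hy₁ := p.fst_mem_support_of_mem_edges he'
    have hy₂ := p.snd_mem_support_of_mem_edges he'
    rw [Sym2.map_pair_eq, Sym2.map_pair_eq, Sym2.eq_iff] at heq
    rcases heq with ⟨hA, hB⟩ | ⟨hA, hB⟩
    · rw [hinj x₁ hx₁ y₁ hy₁ hA, hinj x₂ hx₂ y₂ hy₂ hB]
    · rw [hinj x₁ hx₁ y₂ hy₂ hA, hinj x₂ hx₂ y₁ hy₁ hB, Sym2.eq_swap]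
  refine ⟨⟨⟨?_⟩, ?_⟩, ?_⟩
  · rw [hq1]
    exact (hp.edges_nodup).map_on (fun e he e' he' => hinj' e he e' he')
  · intro hq
    have : q.edges = [] := by rw [hq]; rfl
    rw [hq1] at this
    have hpe : p.edges = [] := by
      cases hpe : p.edges with
      | nil => rfl
      | cons a l => rw [hpe] at this; simp at this
    have h3 := hp.three_le_length
    rw [← Walk.length_edges, hpe] at h3
    simp at h3
  · rw [hq2, ← List.map_tail]
    refine (hp.support_nodup).map_on ?_
    intro u hu w hw heq
    exact hinj u (List.mem_of_mem_tail hu) w (List.mem_of_mem_tail hw) heq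

end Projection

section Construction

variable {α β : Type*} [DecidableEq α] [DecidableEq β]
variable (G : SimpleGraph α) (H : SimpleGraph β) {k l : ℕ} [NeZero l]
variable (cG : Sym2 α → Fin k) (cH : Sym2 β → Fin l) (σ : α → Fin l)

/-- The product colouring. -/
noncomputable def prodCol : Sym2 (α × β) → Fin (k + l) :=
  Sym2.lift ⟨fun x y =>
    if x.2 = y.2 then (cG s(x.1, y.1)).castAdd l
    else if x.1 = y.1 then (cH s(x.2, y.2) + σ x.1).natAdd k
    else ((0 : Fin l)).natAdd k, by
  intro x y
  dsimp only
  by_cases h2 : x.2 = y.2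
  · rw [if_pos h2, if_pos h2.symm, show s(y.1, x.1) = s(x.1, y.1) from Sym2.eq_swap]
  · have h2' : ¬ (y.2 = x.2) := fun h => h2 h.symm
    rw [if_neg h2, if_neg h2']
    by_cases h1 : x.1 = y.1
    · rw [if_pos h1, if_pos h1.symm,
        show s(y.2, x.2) = s(x.2, y.2) from Sym2.eq_swap, h1]
    · have h1' : ¬ (y.1 = x.1) := fun h => h1 h.symm
      rw [if_neg h1, if_neg h1']⟩

lemma prodCol_G (g g' : α) (b : β) :
    prodCol cG cH σ s((g, b), (g', b)) = (cG s(g, g')).castAdd l := by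
  rw [prodCol, Sym2.lift_mk]
  simp

lemma prodCol_H (g : α) {b b' : β} (hne : b ≠ b') :
    prodCol cG cH σ s((g, b), (g, b')) = (cH s(b, b') + σ g).natAdd k := by
  rw [prodCol, Sym2.lift_mk]
  simp [hne]

lemma castAdd_inj {x y : Fin k} : (x.castAdd l) = (y.castAdd l) ↔ x = y := by
  rw [Fin.ext_iff, Fin.ext_iff, Fin.coe_castAdd, Fin.coe_castAdd]

lemma natAdd_inj {x y : Fin l} : (x.natAdd k) = (y.natAdd k) ↔ x = y := by
  rw [Fin.ext_iff, Fin.ext_iff, Fin.coe_natAdd, Fin.coe_natAdd]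
  omega

lemma castAdd_ne_natAdd (x : Fin k) (y : Fin l) : x.castAdd l ≠ y.natAdd k := by
  rw [Fin.ne_iff_vne, Fin.coe_castAdd, Fin.coe_natAdd]
  have := x.isLt
  omega

theorem prod_proper (hpG : IsProperEdgeColoring G cG) (hpH : IsProperEdgeColoring H cH) :
    IsProperEdgeColoring (G □ H) (prodCol cG cH σ) := by
  rintro e₁ he₁ e₂ he₂ hne ⟨v, hv₁, hv₂⟩ heq
  obtain ⟨w₁, hadj₁, rfl⟩ := edge_rep he₁ hv₁
  obtain ⟨w₂, hadj₂, rfl⟩ := edge_rep he₂ hv₂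
  have hwne : w₁ ≠ w₂ := fun h => hne (by rw [h])
  obtain ⟨v1, v2⟩ := v
  obtain ⟨w₁1, w₁2⟩ := w₁
  obtain ⟨w₂1, w₂2⟩ := w₂
  rcases SimpleGraph.boxProd_adj.mp hadj₁ with ⟨hg₁, h₁2⟩ | ⟨hh₁, h₁1⟩ <;>
    rcases SimpleGraph.boxProd_adj.mp hadj₂ with ⟨hg₂, h₂2⟩ | ⟨hh₂, h₂1⟩ <;>
      dsimp only at *
  · -- both G-type
    subst h₁2; subst h₂2
    rw [prodCol_G, prodCol_G, castAdd_inj] at heq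
    have hfne : w₁1 ≠ w₂1 := fun h => hwne (by rw [h])
    exact hpG _ (G.mem_edgeSet.mpr hg₁) _ (G.mem_edgeSet.mpr hg₂)
      (pair_ne hg₂.ne hfne) ⟨v1, by simp, by simp⟩ heq
  · -- G-type, H-type
    subst h₁2; subst h₂1
    rw [prodCol_G, prodCol_H _ _ _ _ hh₂.ne] at heq
    exact castAdd_ne_natAdd _ _ heq
  · -- H-type, G-type
    subst h₁1; subst h₂2
    rw [prodCol_H _ _ _ _ hh₁.ne, prodCol_G] at heq
    exact castAdd_ne_natAdd _ _ heq.symm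
  · -- both H-type
    subst h₁1; subst h₂1
    rw [prodCol_H _ _ _ _ hh₁.ne, prodCol_H _ _ _ _ hh₂.ne, natAdd_inj] at heq
    have heq' : cH s(v2, w₁2) = cH s(v2, w₂2) := add_right_cancel heq
    have hfne : w₁2 ≠ w₂2 := fun h => hwne (by rw [h])
    exact hpH _ (H.mem_edgeSet.mpr hh₁) _ (H.mem_edgeSet.mpr hh₂)
      (pair_ne hh₂.ne hfne) ⟨v2, by simp, by simp⟩ heq'


lemma twoColour_GG_mp (a₀ b₀ : Fin k) {x y : α × β}
    (h : (twoColourSubgraph (G □ H) (prodCol cG cH σ) (a₀.castAdd l) (b₀.castAdd l)).Adj x y) :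
    x.2 = y.2 ∧ (twoColourSubgraph G cG a₀ b₀).Adj x.1 y.1 := by
  obtain ⟨x1, x2⟩ := x; obtain ⟨y1, y2⟩ := y
  obtain ⟨hadj, hcol⟩ := h
  rcases SimpleGraph.boxProd_adj.mp hadj with ⟨hg, h2⟩ | ⟨hh, h1⟩
  · dsimp only at h2 hg ⊢
    subst h2
    rw [prodCol_G] at hcol
    refine ⟨rfl, hg, ?_⟩
    rcases hcol with h | h
    · left; exact castAdd_inj.mp h
    · right; exact castAdd_inj.mp h
  · dsimp only at h1 hh
    subst h1
    rw [prodCol_H _ _ _ _ hh.ne] at hcol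
    rcases hcol with h | h <;> exact absurd h.symm (castAdd_ne_natAdd _ _)

lemma twoColour_HH_mp (a₁ b₁ : Fin l) {x y : α × β}
    (h : (twoColourSubgraph (G □ H) (prodCol cG cH σ) (a₁.natAdd k) (b₁.natAdd k)).Adj x y) :
    x.1 = y.1 ∧ (twoColourSubgraph H cH (a₁ - σ x.1) (b₁ - σ x.1)).Adj x.2 y.2 := by
  obtain ⟨x1, x2⟩ := x; obtain ⟨y1, y2⟩ := y
  obtain ⟨hadj, hcol⟩ := h
  rcases SimpleGraph.boxProd_adj.mp hadj with ⟨hg, h2⟩ | ⟨hh, h1⟩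
  · dsimp only at h2 hg ⊢
    subst h2
    rw [prodCol_G] at hcol
    rcases hcol with h | h <;> exact absurd h (castAdd_ne_natAdd _ _)
  · dsimp only at h1 hh ⊢
    subst h1
    rw [prodCol_H _ _ _ _ hh.ne] at hcol
    refine ⟨rfl, hh, ?_⟩
    rcases hcol with h | h
    · left; exact eq_sub_of_add_eq (natAdd_inj.mp h)
    · right; exact eq_sub_of_add_eq (natAdd_inj.mp h)

lemma twoColour_M_mp (a₀ : Fin k) (b₁ : Fin l) {x y : α × β}
    (h : (twoColourSubgraph (G □ H) (prodCol cG cH σ) (a₀.castAdd l) (b₁.natAdd k)).Adj x y) :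
    (x.2 = y.2 ∧ G.Adj x.1 y.1 ∧ cG s(x.1, y.1) = a₀) ∨
      (x.1 = y.1 ∧ H.Adj x.2 y.2 ∧ cH s(x.2, y.2) + σ x.1 = b₁) := by
  obtain ⟨x1, x2⟩ := x; obtain ⟨y1, y2⟩ := y
  obtain ⟨hadj, hcol⟩ := h
  rcases SimpleGraph.boxProd_adj.mp hadj with ⟨hg, h2⟩ | ⟨hh, h1⟩
  · dsimp only at h2 hg ⊢
    subst h2
    rw [prodCol_G] at hcol
    rcases hcol with h | h
    · exact Or.inl ⟨rfl, hg, castAdd_inj.mp h⟩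
    · exact absurd h (castAdd_ne_natAdd _ _)
  · dsimp only at h1 hh ⊢
    subst h1
    rw [prodCol_H _ _ _ _ hh.ne] at hcol
    rcases hcol with h | h
    · exact absurd h.symm (castAdd_ne_natAdd _ _)
    · exact Or.inr ⟨rfl, hh, natAdd_inj.mp h⟩

lemma acy_GG (haG : ∀ a b, (twoColourSubgraph G cG a b).IsAcyclic) (a₀ b₀ : Fin k) :
    (twoColourSubgraph (G □ H) (prodCol cG cH σ) (a₀.castAdd l) (b₀.castAdd l)).IsAcyclic := by
  intro v p hp
  obtain ⟨q, hq1, hq2, hq3⟩ :=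
    walk_proj_fst (fun {x y} h => twoColour_GG_mp G H cG cH σ a₀ b₀ h) p
  refine haG a₀ b₀ q (cycle_transfer p hp Prod.fst q hq1 hq2 ?_)
  intro u hu w hw heq
  exact Prod.ext heq ((hq3 u hu).trans (hq3 w hw).symm)

lemma acy_HH (haH : ∀ a b, (twoColourSubgraph H cH a b).IsAcyclic) (a₁ b₁ : Fin l) :
    (twoColourSubgraph (G □ H) (prodCol cG cH σ) (a₁.natAdd k) (b₁.natAdd k)).IsAcyclic := by
  intro v p hp
  obtain ⟨q, hq1, hq2, hq3⟩ :=
    walk_proj_snd (fun g => twoColourSubgraph H cH (a₁ - σ g) (b₁ - σ g))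
      (fun {x y} h => twoColour_HH_mp G H cG cH σ a₁ b₁ h) p
  refine haH _ _ q (cycle_transfer p hp Prod.snd q hq1 hq2 ?_)
  intro u hu w hw heq
  exact Prod.ext ((hq3 u hu).trans (hq3 w hw).symm) heq

lemma sub_cancel' {A : Type*} [AddGroup A] {a s t : A} (h : a - s = a - t) : s = t := by
  rw [sub_eq_add_neg, sub_eq_add_neg] at h
  exact neg_injective (add_left_cancel h)

lemma twoColour_comm {γ : Type*} {V' : Type*} (Γ : SimpleGraph V') (c : Sym2 V' → γ) (a b : γ) :
    twoColourSubgraph Γ c a b = twoColourSubgraph Γ c b a := by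
  ext x y
  exact and_congr_right fun _ => or_comm


lemma mixed_walk (hpG : IsProperEdgeColoring G cG) (hpH : IsProperEdgeColoring H cH)
    {a₀ : Fin k} {b₁ : Fin l} {g₀ g₁ : α}
    (hadj01 : G.Adj g₀ g₁) (hcol01 : cG s(g₀, g₁) = a₀) (hσ01 : σ g₀ ≠ σ g₁) :
    ∀ n : ℕ, ∀ {x y : α × β}
      (p : (twoColourSubgraph (G □ H) (prodCol cG cH σ) (a₀.castAdd l) (b₁.natAdd k)).Walk x y),
      p.length = n → List.Chain' (· ≠ ·) p.edges →
      (x.1 = g₀ ∨ x.1 = g₁) → (p.getVert 1).2 = x.2 →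
      ∃ q : (twoColourSubgraph H cH (b₁ - σ g₀) (b₁ - σ g₁)).Walk x.2 y.2,
        List.Chain' (· ≠ ·) q.edges ∧ p.length ≤ 2 * q.length + 1 ∧
        ∀ e ∈ q.edges.head?, cH e = b₁ - σ (if x.1 = g₀ then g₁ else g₀) := by
  intro n
  induction n using Nat.strong_induction_on with
  | _ n ih =>
  intro x y p hlen hch hx hstart
  cases p with
  | nil => exact ⟨Walk.nil, by simp [List.Chain'], by simp, by simp⟩
  | @cons x z y h₁ p₁ =>
    have hz2 : z.2 = x.2 := by
      rwa [Walk.getVert_cons_succ, Walk.getVert_zero] at hstart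
    have hstep₁ : G.Adj x.1 z.1 ∧ cG s(x.1, z.1) = a₀ := by
      rcases twoColour_M_mp G H cG cH σ a₀ b₁ h₁ with ⟨-, hg, hc⟩ | ⟨-, hh, -⟩
      · exact ⟨hg, hc⟩
      · exact absurd hz2 hh.ne'
    have hedge : s(x.1, z.1) = s(g₀, g₁) := by
      by_contra hne
      exact hpG _ (G.mem_edgeSet.mpr hstep₁.1) _ (G.mem_edgeSet.mpr hadj01) hne
        ⟨x.1, by simp, by rcases hx with h | h <;> simp [h]⟩
        (hstep₁.2.trans hcol01.symm)
    have hcase : (x.1 = g₀ ∧ z.1 = g₁) ∨ (x.1 = g₁ ∧ z.1 = g₀) := by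
      rcases Sym2.eq_iff.mp hedge with ⟨h1, h2⟩ | ⟨h1, h2⟩
      · exact Or.inl ⟨h1, h2⟩
      · exact Or.inr ⟨h1, h2⟩
    have hσxz : σ x.1 ≠ σ z.1 := by
      rcases hcase with ⟨h1, h2⟩ | ⟨h1, h2⟩
      · rw [h1, h2]; exact hσ01
      · rw [h1, h2]; exact hσ01.symm
    cases p₁ with
    | nil =>
      refine ⟨(Walk.nil : _root_.SimpleGraph.Walk _ x.2 x.2).copy rfl hz2.symm, ?_, ?_, ?_⟩
      · simp [List.Chain']
      · simp
      · simp
    | @cons z w y' h₂ p₂ =>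
      have hne12 : s(x, z) ≠ s(z, w) := by
        have hch' := hch
        rw [Walk.edges_cons, Walk.edges_cons] at hch'
        exact (List.isChain_cons_cons.mp hch').1
      have hstep₂ : z.1 = w.1 ∧ H.Adj z.2 w.2 ∧ cH s(z.2, w.2) + σ z.1 = b₁ := by
        rcases twoColour_M_mp G H cG cH σ a₀ b₁ h₂ with ⟨h2eq, hg₂, hc₂⟩ | hH
        · exfalso
          have hedge₂ : s(z.1, w.1) = s(g₀, g₁) := by
            by_contra hne
            refine hpG _ (G.mem_edgeSet.mpr hg₂) _ (G.mem_edgeSet.mpr hadj01) hne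
              ⟨z.1, by simp, ?_⟩ (hc₂.trans hcol01.symm)
            rcases hcase with ⟨-, h⟩ | ⟨-, h⟩ <;> simp [h]
          have hw1 : w.1 = x.1 := by
            rcases hcase with ⟨hx1, hz1⟩ | ⟨hx1, hz1⟩ <;>
              rcases Sym2.eq_iff.mp hedge₂ with ⟨hz1', hw1⟩ | ⟨hz1', hw1⟩
            · exact absurd (hz1' ▸ hz1 : (g₀ : α) = g₁) hadj01.ne
            · rw [hw1, hx1]
            · rw [hw1, hx1]
            · exact absurd (hz1' ▸ hz1 : (g₁ : α) = g₀) hadj01.ne'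
          have hwx : w = x := Prod.ext hw1 (h2eq.symm.trans hz2)
          apply hne12
          rw [hwx]
          exact Sym2.eq_swap
        · exact hH
      have hTadj : (twoColourSubgraph H cH (b₁ - σ g₀) (b₁ - σ g₁)).Adj z.2 w.2 := by
        refine ⟨hstep₂.2.1, ?_⟩
        rcases hcase with ⟨hx1, hz1⟩ | ⟨hx1, hz1⟩
        · right; rw [← hz1]; exact (eq_sub_of_add_eq hstep₂.2.2)
        · left; rw [← hz1]; exact (eq_sub_of_add_eq hstep₂.2.2)
      have hstart₂ : (p₂.getVert 1).2 = w.2 := by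
        cases p₂ with
        | nil => simp [Walk.getVert]
        | @cons w u y'' h₃ p₃ =>
          rw [Walk.getVert_cons_succ, Walk.getVert_zero]
          by_contra hneu
          have hstep₃ : w.1 = u.1 ∧ H.Adj w.2 u.2 ∧ cH s(w.2, u.2) + σ w.1 = b₁ := by
            rcases twoColour_M_mp G H cG cH σ a₀ b₁ h₃ with ⟨h2eq, -, -⟩ | hH
            · exact absurd h2eq.symm hneu
            · exact hH
          have hcc : cH s(z.2, w.2) = cH s(w.2, u.2) := by
            have e1 := hstep₂.2.2
            have e2 := hstep₃.2.2
            rw [← hstep₂.1] at e2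
            exact add_right_cancel (e1.trans e2.symm)
          have hfe : s(z.2, w.2) = s(w.2, u.2) := by
            by_contra hne'
            exact hpH _ (H.mem_edgeSet.mpr hstep₂.2.1) _ (H.mem_edgeSet.mpr hstep₃.2.1)
              hne' ⟨w.2, by simp, by simp⟩ hcc
          have hu2 : u.2 = z.2 := by
            rcases Sym2.eq_iff.mp hfe with ⟨h1, -⟩ | ⟨h1, -⟩
            · exact absurd h1 hstep₂.2.1.ne
            · exact h1.symm
          have hu : u = z := Prod.ext (hstep₃.1.symm.trans hstep₂.1.symm) hu2
          have hne23 : s(z, w) ≠ s(w, u) := by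
            have hch' := hch
            rw [Walk.edges_cons, Walk.edges_cons, Walk.edges_cons] at hch'
            exact (List.isChain_cons_cons.mp (hch'.tail)).1
          apply hne23
          rw [hu]
          exact Sym2.eq_swap
      have hx₂ : w.1 = g₀ ∨ w.1 = g₁ := by
        rcases hcase with ⟨-, hz1⟩ | ⟨-, hz1⟩
        · exact Or.inr (hstep₂.1 ▸ hz1)
        · exact Or.inl (hstep₂.1 ▸ hz1)
      have hch₂ : List.Chain' (· ≠ ·) p₂.edges := by
        have hch' := hch
        rw [Walk.edges_cons, Walk.edges_cons] at hch'
        exact hch'.tail.tail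
      have hlen₂ : p₂.length < n := by
        rw [← hlen]
        simp only [Walk.length_cons]
        omega
      obtain ⟨q₂, hq₂ch, hq₂len, hq₂head⟩ := ih p₂.length hlen₂ p₂ rfl hch₂ hx₂ hstart₂
      have hcolzw : cH s(z.2, w.2) = b₁ - σ z.1 := eq_sub_of_add_eq hstep₂.2.2
      have hheadne : ∀ e ∈ q₂.edges.head?, s(z.2, w.2) ≠ e := by
        intro e he heq
        have h1 := hq₂head e he
        rw [← heq, hcolzw] at h1
        have h2 : σ z.1 = σ (if w.1 = g₀ then g₁ else g₀) := sub_cancel' h1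
        have hzw1 := hstep₂.1
        rcases hcase with ⟨hx1, hz1⟩ | ⟨hx1, hz1⟩
        · rw [hz1] at hzw1
          rw [if_neg (by rw [← hzw1]; exact hadj01.ne'), hz1] at h2
          exact hσ01.symm h2
        · rw [hz1] at hzw1
          rw [if_pos hzw1.symm, hz1] at h2
          exact hσ01 h2
      refine ⟨(Walk.cons hTadj q₂).copy hz2 rfl, ?_, ?_, ?_⟩
      · rw [Walk.edges_copy, Walk.edges_cons]
        exact List.isChain_cons.mpr ⟨hheadne, hq₂ch⟩
      · rw [Walk.length_copy, Walk.length_cons]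
        simp only [Walk.length_cons]
        omega
      · rw [Walk.edges_copy, Walk.edges_cons]
        intro e he
        simp only [List.head?_cons, Option.mem_some_iff] at he
        subst he
        rw [hcolzw]
        rcases hcase with ⟨hx1, hz1⟩ | ⟨hx1, hz1⟩
        · rw [if_pos hx1, hz1]
        · rw [if_neg (by rw [hx1]; exact hadj01.ne'), hz1]


lemma acy_M (hpG : IsProperEdgeColoring G cG) (hpH : IsProperEdgeColoring H cH)
    (haH : ∀ a b, (twoColourSubgraph H cH a b).IsAcyclic)
    (hσ : ∀ {u v : α}, G.Adj u v → σ u ≠ σ v) (a₀ : Fin k) (b₁ : Fin l) :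
    (twoColourSubgraph (G □ H) (prodCol cG cH σ) (a₀.castAdd l) (b₁.natAdd k)).IsAcyclic := by
  intro v p hp
  have h3 := hp.three_le_length
  have hchain : List.Chain' (· ≠ ·) p.edges := List.Pairwise.isChain hp.edges_nodup
  cases p with
  | nil => simp at h3
  | @cons v z y h₁ p₁ =>
    rcases twoColour_M_mp G H cG cH σ a₀ b₁ h₁ with ⟨h2eq, hg₁, hc₁⟩ | ⟨h1eq, hh₁, hc₁⟩
    · -- first step is a G-step: apply mixed_walk directly
      obtain ⟨q, hqch, hqlen, -⟩ :=
        mixed_walk G H cG cH σ hpG hpH hg₁ hc₁ (hσ hg₁) (Walk.cons h₁ p₁).length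
          (Walk.cons h₁ p₁) rfl hchain (Or.inl rfl)
          (by rw [Walk.getVert_cons_succ, Walk.getVert_zero]; exact h2eq.symm)
      have hq1 : 1 ≤ q.length := by
        by_contra hq0
        push_neg at hq0
        omega
      have hqpath := isPath_of_chain_ne (haH _ _) q hqch
      rw [Walk.isPath_iff_eq_nil] at hqpath
      rw [hqpath] at hq1
      simp at hq1
    · -- first step is an H-step
      cases p₁ with
      | nil => simp at h3
      | @cons z w y' h₂ p₂ =>
        have hne12 : s(v, z) ≠ s(z, w) := by
          have hch' := hchain
          rw [Walk.edges_cons, Walk.edges_cons] at hch'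
          exact (List.isChain_cons_cons.mp hch').1
        rcases twoColour_M_mp G H cG cH σ a₀ b₁ h₂ with ⟨h2eq₂, hg₂, hc₂⟩ | ⟨h1eq₂, hh₂, hc₂⟩
        · -- second step is a G-step: rotate the closed walk to start at z
          set W' := (Walk.cons h₂ p₂).append (Walk.cons h₁ Walk.nil) with hW'
          have hWedges : W'.edges = (s(z, w) :: p₂.edges) ++ [s(v, z)] := by
            rw [hW', Walk.edges_append, Walk.edges_cons, Walk.edges_cons, Walk.edges_nil]
          have hpedges : (Walk.cons h₁ (Walk.cons h₂ p₂)).edges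
              = s(v, z) :: s(z, w) :: p₂.edges := by
            rw [Walk.edges_cons, Walk.edges_cons]
          have hWnodup : W'.edges.Nodup := by
            rw [hWedges]
            refine (List.perm_append_singleton _ _).nodup_iff.mpr ?_
            rw [← hpedges]
            exact hp.edges_nodup
          have hWchain : List.Chain' (· ≠ ·) W'.edges := List.Pairwise.isChain hWnodup
          have hWcons : W' = Walk.cons h₂ (p₂.append (Walk.cons h₁ Walk.nil)) := by
            rw [hW', Walk.cons_append]
          have hWstart : (W'.getVert 1).2 = z.2 := by
            rw [hWcons, Walk.getVert_cons_succ, Walk.getVert_zero]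
            exact h2eq₂.symm
          have hWlen : W'.length = p₂.length + 2 := by
            rw [hW', Walk.length_append]
            simp
          obtain ⟨q, hqch, hqlen, -⟩ :=
            mixed_walk G H cG cH σ hpG hpH hg₂ hc₂ (hσ hg₂) W'.length W' rfl hWchain
              (Or.inl rfl) hWstart
          have hplen : (Walk.cons h₁ (Walk.cons h₂ p₂)).length = p₂.length + 2 := by
            simp
          have hq1 : 1 ≤ q.length := by
            rw [hWlen] at hqlen
            rw [hplen] at h3
            omega
          have hqpath := isPath_of_chain_ne (haH _ _) q hqch
          rw [Walk.isPath_iff_eq_nil] at hqpath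
          rw [hqpath] at hq1
          simp at hq1
        · -- two consecutive H-steps: impossible
          exfalso
          have hcc : cH s(v.2, z.2) = cH s(z.2, w.2) := by
            have e1 := hc₁
            have e2 := hc₂
            rw [← h1eq] at e2
            exact add_right_cancel (e1.trans e2.symm)
          have hfe : s(v.2, z.2) = s(z.2, w.2) := by
            by_contra hne'
            exact hpH _ (H.mem_edgeSet.mpr hh₁) _ (H.mem_edgeSet.mpr hh₂) hne'
              ⟨z.2, by simp, by simp⟩ hcc
          have hw2 : w.2 = v.2 := by
            rcases Sym2.eq_iff.mp hfe with ⟨h1, -⟩ | ⟨h1, -⟩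
            · exact absurd h1 hh₁.ne
            · exact h1.symm
          have hwv : w = v := Prod.ext (h1eq₂.symm.trans h1eq.symm) hw2
          apply hne12
          rw [hwv]
          exact Sym2.eq_swap


theorem prod_acyclic (hG : IsAcyclicEdgeColoring G cG) (hH : IsAcyclicEdgeColoring H cH)
    (hσ : ∀ {u v : α}, G.Adj u v → σ u ≠ σ v) :
    IsAcyclicEdgeColoring (G □ H) (prodCol cG cH σ) := by
  refine ⟨prod_proper G H cG cH σ hG.1 hH.1, ?_⟩
  intro a b
  rcases Nat.lt_or_ge (a : ℕ) k with ha | ha <;> rcases Nat.lt_or_ge (b : ℕ) k with hb | hb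
  · obtain ⟨a₀, rfl⟩ : ∃ a₀ : Fin k, a = a₀.castAdd l :=
      ⟨⟨(a : ℕ), ha⟩, by apply Fin.ext; simp⟩
    obtain ⟨b₀, rfl⟩ : ∃ b₀ : Fin k, b = b₀.castAdd l :=
      ⟨⟨(b : ℕ), hb⟩, by apply Fin.ext; simp⟩
    exact acy_GG G H cG cH σ hG.2 a₀ b₀
  · obtain ⟨a₀, rfl⟩ : ∃ a₀ : Fin k, a = a₀.castAdd l :=
      ⟨⟨(a : ℕ), ha⟩, by apply Fin.ext; simp⟩
    obtain ⟨b₁, rfl⟩ : ∃ b₁ : Fin l, b = b₁.natAdd k :=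
      ⟨⟨(b : ℕ) - k, by have := b.isLt; omega⟩, by
        apply Fin.ext; simp only [Fin.coe_natAdd]; omega⟩
    exact acy_M G H cG cH σ hG.1 hH.1 hH.2 hσ a₀ b₁
  · obtain ⟨a₁, rfl⟩ : ∃ a₁ : Fin l, a = a₁.natAdd k :=
      ⟨⟨(a : ℕ) - k, by have := a.isLt; omega⟩, by
        apply Fin.ext; simp only [Fin.coe_natAdd]; omega⟩
    obtain ⟨b₀, rfl⟩ : ∃ b₀ : Fin k, b = b₀.castAdd l :=
      ⟨⟨(b : ℕ), hb⟩, by apply Fin.ext; simp⟩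
    rw [twoColour_comm]
    exact acy_M G H cG cH σ hG.1 hH.1 hH.2 hσ b₀ a₁
  · obtain ⟨a₁, rfl⟩ : ∃ a₁ : Fin l, a = a₁.natAdd k :=
      ⟨⟨(a : ℕ) - k, by have := a.isLt; omega⟩, by
        apply Fin.ext; simp only [Fin.coe_natAdd]; omega⟩
    obtain ⟨b₁, rfl⟩ : ∃ b₁ : Fin l, b = b₁.natAdd k :=
      ⟨⟨(b : ℕ) - k, by have := b.isLt; omega⟩, by
        apply Fin.ext; simp only [Fin.coe_natAdd]; omega⟩
    exact acy_HH G H cG cH σ hH.2 a₁ b₁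

end Construction

end AcyclicAux

/-- Main theorem: for connected nontrivial finite graphs `G` and `H` with
`max {a'(G), a'(H)} > 1`, we have `a'(G □ H) ≤ a'(G) + a'(H)`. -/
theorem acyclicChromaticIndex_boxProd_le {α β : Type*} [Fintype α] [Fintype β]
    [Nontrivial α] [Nontrivial β] (G : SimpleGraph α) (H : SimpleGraph β)
    (hG : G.Connected) (hH : H.Connected)
    (hmax : 1 < max (acyclicChromaticIndex G) (acyclicChromaticIndex H)) :
    acyclicChromaticIndex (G □ H) ≤ acyclicChromaticIndex G + acyclicChromaticIndex H := by
  classical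
  set k := acyclicChromaticIndex G with hk
  set l := acyclicChromaticIndex H with hl
  obtain ⟨cG, hcG⟩ := AcyclicAux.exists_optimal G
  obtain ⟨cH, hcH⟩ := AcyclicAux.exists_optimal H
  by_cases hA : G.Colorable l ∧ 2 ≤ l
  · obtain ⟨⟨C⟩, hl2⟩ := hA
    haveI : NeZero l := ⟨by omega⟩
    have hc := AcyclicAux.prod_acyclic G H cG cH (fun v => C v) hcG hcH
      (fun {u v} h => C.valid h)
    exact AcyclicAux.aci_le _ _ hc
  by_cases hB : H.Colorable k ∧ 2 ≤ k
  · obtain ⟨⟨C⟩, hk2⟩ := hB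
    haveI : NeZero k := ⟨by omega⟩
    have hc := AcyclicAux.prod_acyclic H G cH cG (fun v => C v) hcH hcG
      (fun {u v} h => C.valid h)
    have h1 : acyclicChromaticIndex (H □ G) ≤ l + k := AcyclicAux.aci_le _ _ hc
    have h2 : acyclicChromaticIndex (G □ H) ≤ acyclicChromaticIndex (H □ G) :=
      AcyclicAux.aci_le_of_iso (SimpleGraph.boxProdComm G H)
    omega
  · exfalso
    push_neg at hA hB
    have hdegG : ∀ v, G.degree v ≤ k := fun v => AcyclicAux.degree_le_of_proper hcG.1 v
    have hdegH : ∀ v, H.degree v ≤ l := fun v => AcyclicAux.degree_le_of_proper hcH.1 v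
    have hGcol : G.Colorable (k + 1) :=
      AcyclicAux.colorable_of_degree_lt G (fun v => by have := hdegG v; omega)
    have hHcol : H.Colorable (l + 1) :=
      AcyclicAux.colorable_of_degree_lt H (fun v => by have := hdegH v; omega)
    rcases le_or_gt 2 l with hl2 | hl2
    · have hGnl : ¬ G.Colorable l := fun h => absurd hl2 (not_le.mpr (hA h))
      have hlk : l ≤ k := by
        by_contra h
        push_neg at h
        exact hGnl (SimpleGraph.Colorable.mono (by omega) hGcol)
      have hk2 : 2 ≤ k := le_trans hl2 hlk
      have hHnk : ¬ H.Colorable k := fun h => absurd hk2 (not_le.mpr (hB h))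
      have hkl : k ≤ l := by
        by_contra h
        push_neg at h
        exact hHnk (SimpleGraph.Colorable.mono (by omega) hHcol)
      have hGnk : ¬ G.Colorable k := by
        rw [le_antisymm hkl hlk]
        exact hGnl
      by_cases hreg : ∀ v, G.degree v = k
      · exact AcyclicAux.not_acyclic_regular hreg hk2 hcG
      · push_neg at hreg
        obtain ⟨v₀, hv₀⟩ := hreg
        exact hGnk (AcyclicAux.colorable_of_connected_nonregular G hG hdegG
          (lt_of_le_of_ne (hdegG v₀) hv₀))
    · have hk2 : 2 ≤ k := by
        rcases lt_max_iff.mp hmax with h | h <;> omega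
      have hHnk : ¬ H.Colorable k := fun h => absurd hk2 (not_le.mpr (hB h))
      have hkl : k ≤ l := by
        by_contra h
        push_neg at h
        exact hHnk (SimpleGraph.Colorable.mono (by omega) hHcol)
      omega
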